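/- Let T be a power partial isometry on a Hilbert space H, let P be the orthogonal projection onto ⋂_{n≥1} T^n H and Q the orthogonal projection onto ⋂_{n≥1} T*^n H. Then PQ = QP. -/

import Mathlib

open ContinuousLinearMap

section Aux

variable {H : Type*} [NormedAddCommGroup H] [InnerProductSpace ℂ H] [CompleteSpace H]

/-- If `a`, `b` are self-adjoint idempotents with `a*b*a*b*a = a*b*a`, they commute. -/
private lemma projComm_aux {a b : H →L[ℂ] H} (ha : IsSelfAdjoint a) (hb : IsSelfAdjoint b)
    (ha2 : a * a = a) (hb2 : b * b = b) (h : a * b * a * b * a = a * b * a) :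
    a * b = b * a := by
  have t1 : a * b * (b * a) = a * b * a := by
    rw [show a * b * (b * a) = a * (b * b) * a by noncomm_ring, hb2]
  have t2 : a * b * (a * b * a) = a * b * a := by
    rw [show a * b * (a * b * a) = a * b * a * b * a by noncomm_ring, h]
  have t3 : a * b * a * (b * a) = a * b * a := by
    rw [show a * b * a * (b * a) = a * b * a * b * a by noncomm_ring, h]
  have t4 : a * b * a * (a * b * a) = a * b * a := by
    rw [show a * b * a * (a * b * a) = a * b * (a * a) * (b * a) by noncomm_ring, ha2, t3]
  have key : star (b * a - a * b * a) * (b * a - a * b * a) = 0 := by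
    have hs : star (b * a - a * b * a) = a * b - a * b * a := by
      simp only [star_sub, star_mul, ha.star_eq, hb.star_eq]
      noncomm_ring
    rw [hs]
    rw [show (a * b - a * b * a) * (b * a - a * b * a)
        = a * b * (b * a) - a * b * (a * b * a) - (a * b * a * (b * a) - a * b * a * (a * b * a))
        by noncomm_ring, t1, t2, t3, t4]
    abel
  have hz : b * a - a * b * a = 0 := (CStarRing.star_mul_self_eq_zero_iff _).mp key
  have hba : b * a = a * b * a := by rwa [sub_eq_zero] at hz
  have hab : a * b = a * b * a := by
    have := congrArg star hba
    simp only [star_mul, ha.star_eq, hb.star_eq] at this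
    rw [← mul_assoc] at this
    exact this
  rw [hab, hba]

/-- Commutation criterion: if `Q'` is self-adjoint with `Q' (P' (Q' x)) = P' (Q' x)`
for all `x` and `P'` is self-adjoint, then they commute. -/
private lemma comm_of_fix {P' Q' : H →L[ℂ] H} (hP : IsSelfAdjoint P') (hQ : IsSelfAdjoint Q')
    (h1 : ∀ x, Q' (P' (Q' x)) = P' (Q' x)) : P' * Q' = Q' * P' := by
  have h2 : Q' * (P' * Q') = P' * Q' := by
    ext x; simpa [ContinuousLinearMap.mul_apply] using h1 x
  have h3 : Q' * (P' * Q') = Q' * P' := by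
    have := congrArg star h2
    simpa only [star_mul, hP.star_eq, hQ.star_eq, mul_assoc] using this
  rw [← h2, h3]

end Aux

/-- For a power partial isometry `T`, the orthogonal projections `P` onto
`⋂_{n≥1} T^n H` and `Q` onto `⋂_{n≥1} T*^n H` commute. -/
theorem orthogonalProjections_commute
    {H : Type*} [NormedAddCommGroup H] [InnerProductSpace ℂ H] [CompleteSpace H]
    (T : H →L[ℂ] H)
    (hT : ∀ n : ℕ, T ^ n * (adjoint T) ^ n * T ^ n = T ^ n)
    (P Q : H →L[ℂ] H)
    -- `P` is the orthogonal projection onto `⋂_{n ≥ 1} T^n H`: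
    (hPsa : IsSelfAdjoint P)
    (hPfix : ∀ x ∈ ⨅ n : ℕ, LinearMap.range ((T ^ (n + 1) : H →L[ℂ] H) : H →ₗ[ℂ] H), P x = x)
    (hPrange : ∀ x : H, P x ∈ ⨅ n : ℕ, LinearMap.range ((T ^ (n + 1) : H →L[ℂ] H) : H →ₗ[ℂ] H))
    -- `Q` is the orthogonal projection onto `⋂_{n ≥ 1} T*^n H`:
    (hQsa : IsSelfAdjoint Q)
    (hQfix : ∀ x ∈ ⨅ n : ℕ, LinearMap.range (((adjoint T) ^ (n + 1) : H →L[ℂ] H) : H →ₗ[ℂ] H), Q x = x)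
    (hQrange : ∀ x : H, Q x ∈ ⨅ n : ℕ, LinearMap.range (((adjoint T) ^ (n + 1) : H →L[ℂ] H) : H →ₗ[ℂ] H)) :
    P * Q = Q * P := by
  set S := adjoint T with hS
  have hstarT : ∀ n : ℕ, star (T ^ n) = S ^ n := by
    intro n; rw [star_pow, hS, ContinuousLinearMap.star_eq_adjoint]
  have hstarS : ∀ n : ℕ, star (S ^ n) = T ^ n := by
    intro n; rw [star_pow, hS, ← ContinuousLinearMap.star_eq_adjoint, star_star]
  -- adjoint version of the power partial isometry condition
  have hTstar : ∀ n : ℕ, S ^ n * T ^ n * S ^ n = S ^ n := by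
    intro n
    have := congrArg star (hT n)
    simpa only [star_mul, hstarT, hstarS, mul_assoc] using this
  -- E n = T^n S^n : projection onto range T^n ; F n = S^n T^n : projection onto range S^n
  set E : ℕ → (H →L[ℂ] H) := fun n => T ^ n * S ^ n with hE
  set F : ℕ → (H →L[ℂ] H) := fun n => S ^ n * T ^ n with hF
  have hEsa : ∀ n, IsSelfAdjoint (E n) := by
    intro n
    simp only [IsSelfAdjoint, hE, star_mul, hstarT, hstarS]
  have hFsa : ∀ n, IsSelfAdjoint (F n) := by
    intro n
    simp only [IsSelfAdjoint, hF, star_mul, hstarT, hstarS]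
  have hEidem : ∀ n, E n * E n = E n := by
    intro n
    simp only [hE]
    rw [show T ^ n * S ^ n * (T ^ n * S ^ n) = T ^ n * S ^ n * T ^ n * S ^ n by noncomm_ring,
      hT n]
  have hFidem : ∀ n, F n * F n = F n := by
    intro n
    simp only [hF]
    rw [show S ^ n * T ^ n * (S ^ n * T ^ n) = S ^ n * T ^ n * S ^ n * T ^ n by noncomm_ring,
      hTstar n]
  -- Key algebraic identity: F n * E m * F n * E m * F n = F n * E m * F n
  have hfive : ∀ n m, F n * E m * F n * E m * F n = F n * E m * F n := by
    intro n m
    have hw : ∀ x : H →L[ℂ] H,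
        T ^ n * (T ^ m * (S ^ m * (S ^ n * (T ^ n * (T ^ m * x))))) = T ^ n * (T ^ m * x) := by
      intro x
      have h0 : T ^ (n + m) * S ^ (n + m) * T ^ (n + m) * x = T ^ (n + m) * x :=
        congrArg (· * x) (hT (n + m))
      rw [show S ^ (n + m) = S ^ m * S ^ n by rw [← pow_add, add_comm],
        show T ^ (n + m) = T ^ n * T ^ m from pow_add T n m] at h0
      simpa only [mul_assoc] using h0
    simp only [hE, hF, mul_assoc]
    rw [hw (S ^ m * (S ^ n * (T ^ n)))]
  have hcommEF : ∀ n m, F n * E m = E m * F n := by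
    intro n m
    exact projComm_aux (hFsa n) (hEsa m) (hFidem n) (hEidem m) (hfive n m)
  -- E n fixes range of T^n, F n fixes range of S^n
  have hEfix : ∀ n (x : H), x ∈ LinearMap.range ((T ^ n : H →L[ℂ] H) : H →ₗ[ℂ] H) → E n x = x := by
    rintro n x ⟨y, rfl⟩
    have := DFunLike.congr_fun (hT n) y
    simpa [hE, ContinuousLinearMap.mul_apply, Module.End.pow_apply] using this
  have hFfix : ∀ n (x : H), x ∈ LinearMap.range ((S ^ n : H →L[ℂ] H) : H →ₗ[ℂ] H) → F n x = x := by
    rintro n x ⟨y, rfl⟩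
    have := DFunLike.congr_fun (hTstar n) y
    simpa [hF, ContinuousLinearMap.mul_apply, Module.End.pow_apply] using this
  -- E k maps N = ⋂ range S^(m+1) into itself
  have hEmapsN : ∀ k (y : H), (y ∈ ⨅ n : ℕ, LinearMap.range ((S ^ (n + 1) : H →L[ℂ] H) : H →ₗ[ℂ] H)) →
      E k y ∈ ⨅ n : ℕ, LinearMap.range ((S ^ (n + 1) : H →L[ℂ] H) : H →ₗ[ℂ] H) := by
    intro k y hy
    rw [Submodule.mem_iInf] at hy ⊢
    intro m
    have h1 : F (m + 1) y = y := hFfix (m + 1) y (hy m)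
    have h2 : E k (F (m + 1) y) = F (m + 1) (E k y) := by
      have := DFunLike.congr_fun (hcommEF (m + 1) k) y
      simpa [ContinuousLinearMap.mul_apply] using this.symm
    rw [h1] at h2
    rw [h2]
    exact ⟨(T ^ (m + 1)) ((E k) y), by simp [hF, ContinuousLinearMap.mul_apply, Module.End.pow_apply, Function.iterate_succ_apply]⟩
  -- Q commutes with E k
  have hQE : ∀ k, E k * Q = Q * E k := by
    intro k
    refine comm_of_fix (hEsa k) hQsa ?_
    intro x
    exact hQfix _ (hEmapsN k (Q x) (hQrange x))
  -- Q maps M = ⋂ range T^(k+1) into itself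
  have hQmapsM : ∀ x : H, (x ∈ ⨅ n : ℕ, LinearMap.range ((T ^ (n + 1) : H →L[ℂ] H) : H →ₗ[ℂ] H)) →
      Q x ∈ ⨅ n : ℕ, LinearMap.range ((T ^ (n + 1) : H →L[ℂ] H) : H →ₗ[ℂ] H) := by
    intro x hx
    rw [Submodule.mem_iInf] at hx ⊢
    intro k
    have h1 : E (k + 1) x = x := hEfix (k + 1) x (hx k)
    have h2 : Q (E (k + 1) x) = E (k + 1) (Q x) := by
      have := DFunLike.congr_fun (hQE (k + 1)) x
      simpa [ContinuousLinearMap.mul_apply] using this.symm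
    rw [h1] at h2
    rw [h2]
    exact ⟨(S ^ (k + 1)) (Q x), by simp [hE, ContinuousLinearMap.mul_apply, Module.End.pow_apply, Function.iterate_succ_apply]⟩
  -- conclude
  have : Q * P = P * Q := by
    refine comm_of_fix hQsa hPsa ?_
    intro x
    exact hPfix _ (hQmapsM (P x) (hPrange x))
  exact this.symm
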